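/- Let a, b, c, d be points in the plane ℝ² and let I ⊆ ℝ be a nonempty open interval such that for every θ ∈ I one has |⟨a − c, (−sin θ, cos θ)⟩| = |⟨b − d, (cos θ, sin θ)⟩| (that is, for every θ ∈ I the rectangle in orientation θ with a on its top side, b on its right side, c on its bottom side, and d on its left side is a square). Then ‖a − c‖ = ‖b − d‖ and the segments ac and bd are orthogonal, i.e., ⟨a − c, b − d⟩ = 0. -/

import Mathlib

open Real Set

/-- The four side labels of a square. -/
inductive SqSide : Type
  | top
  | right
  | bottom
  | left
  deriving DecidableEq

/-- A (solid, closed) square in the plane, given by its center, its radius `r`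
(half the side length) and its orientation `θ`. -/
structure Square : Type where
  center : ℝ × ℝ
  r : ℝ
  θ : ℝ

namespace Square

/-- The local `x`-coordinate of a point in the rotated frame of the square. -/
noncomputable def lx (S : Square) (p : ℝ × ℝ) : ℝ :=
  (p.1 - S.center.1) * Real.cos S.θ + (p.2 - S.center.2) * Real.sin S.θ

/-- The local `y`-coordinate of a point in the rotated frame of the square. -/
noncomputable def ly (S : Square) (p : ℝ × ℝ) : ℝ :=
  -(p.1 - S.center.1) * Real.sin S.θ + (p.2 - S.center.2) * Real.cos S.θ

/-- A valid parametrization: nonnegative radius and orientation in `[0, π/2)`.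
Every geometric square (with sides parallel to the directions `θ` and `θ + π/2`
for some `θ`) has such a parametrization, which is unique when `0 < r`. -/
def Valid (S : Square) : Prop :=
  0 ≤ S.r ∧ 0 ≤ S.θ ∧ S.θ < Real.pi / 2

/-- Membership in the closed solid square. -/
def Mem (S : Square) (p : ℝ × ℝ) : Prop :=
  |S.lx p| ≤ S.r ∧ |S.ly p| ≤ S.r

/-- The square as a subset of the plane. -/
def toSet (S : Square) : Set (ℝ × ℝ) :=
  {p | S.Mem p}

/-- Membership in the interior of the square. -/
def InteriorMem (S : Square) (p : ℝ × ℝ) : Prop :=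
  |S.lx p| < S.r ∧ |S.ly p| < S.r

/-- `p` lies on the closed side of `S` labeled `a` (sides include their endpoints). -/
def OnSide (S : Square) (a : SqSide) (p : ℝ × ℝ) : Prop :=
  match a with
  | SqSide.top    => S.ly p = S.r ∧ |S.lx p| ≤ S.r
  | SqSide.bottom => S.ly p = -S.r ∧ |S.lx p| ≤ S.r
  | SqSide.right  => S.lx p = S.r ∧ |S.ly p| ≤ S.r
  | SqSide.left   => S.lx p = -S.r ∧ |S.ly p| ≤ S.r

/-- `p` lies on the boundary of `S`. -/
def OnBoundary (S : Square) (p : ℝ × ℝ) : Prop :=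
  ∃ a : SqSide, S.OnSide a p

/-- `S` is a square in orientation `φ`, i.e. its sides are parallel to the
directions `φ` and `φ + π/2` (orientations are taken modulo `π/2`). -/
def InOrientation (S : Square) (φ : ℝ) : Prop :=
  ∃ k : ℤ, φ - S.θ = (k : ℝ) * (Real.pi / 2)

/-- The opposite side label. -/
def _root_.SqSide.opp : SqSide → SqSide
  | SqSide.top => SqSide.bottom
  | SqSide.bottom => SqSide.top
  | SqSide.left => SqSide.right
  | SqSide.right => SqSide.left

end Square

/-- The set of contact pairs of the square `S` with respect to the point set `P`:
pairs `(p, a)` with `p ∈ P` lying on the side of `S` labeled `a`. -/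
def contactPairs (P : Finset (ℝ × ℝ)) (S : Square) : Set ((ℝ × ℝ) × SqSide) :=
  {pa | pa.1 ∈ P ∧ S.OnSide pa.2 pa.1}

/-- The set of contact points of `S`: points of `P` on the boundary of `S`. -/
def contactPoints (P : Finset (ℝ × ℝ)) (S : Square) : Set (ℝ × ℝ) :=
  {p | p ∈ P ∧ S.OnBoundary p}

/-- `S` is an empty square among `P`: a (validly parametrized) square whose
interior contains no point of `P`. -/
def IsEmptySquare (P : Finset (ℝ × ℝ)) (S : Square) : Prop :=
  S.Valid ∧ ∀ p ∈ P, ¬ S.InteriorMem p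

/-- `P` is in general position: no square in any orientation has five or more
contact pairs among `P`. -/
def GenPos (P : Finset (ℝ × ℝ)) : Prop :=
  ∀ S : Square, S.Valid → (contactPairs P S).ncard ≤ 4

/-- A `4`-square: an empty square with exactly four contact pairs. -/
def Is4Square (P : Finset (ℝ × ℝ)) (S : Square) : Prop :=
  IsEmptySquare P S ∧ (contactPairs P S).ncard = 4

/-- A nontrivial `4`-square: a `4`-square which is not a degenerate
single-point square (i.e. it has positive radius). -/
def IsNontrivial4Square (P : Finset (ℝ × ℝ)) (S : Square) : Prop :=
  Is4Square P S ∧ 0 < S.r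

/-- A `(4,k)`-square: a `4`-square with exactly `k` contact points. -/
def Is4kSquare (P : Finset (ℝ × ℝ)) (k : ℕ) (S : Square) : Prop :=
  Is4Square P S ∧ (contactPoints P S).ncard = k

/-- `S` is stapled: some side of `S` contains two distinct points of `P`. -/
def IsStapled (P : Finset (ℝ × ℝ)) (S : Square) : Prop :=
  ∃ a : SqSide, ∃ p ∈ P, ∃ q ∈ P, p ≠ q ∧ S.OnSide a p ∧ S.OnSide a q

/-- Dot product on `ℝ × ℝ`. -/
def dot2 (u v : ℝ × ℝ) : ℝ := u.1 * v.1 + u.2 * v.2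

/-- Euclidean norm on `ℝ × ℝ`. -/
noncomputable def euclNorm (u : ℝ × ℝ) : ℝ := Real.sqrt (u.1 ^ 2 + u.2 ^ 2)

lemma deriv_vanish_on_Ioo {h h' : ℝ → ℝ} {lo hi : ℝ}
    (hd : ∀ θ, HasDerivAt h (h' θ) θ) (h0 : ∀ θ ∈ Set.Ioo lo hi, h θ = 0) :
    ∀ θ ∈ Set.Ioo lo hi, h' θ = 0 := by
  intro θ hθ
  have heq : h =ᶠ[nhds θ] (fun _ => (0:ℝ)) :=
    Filter.eventuallyEq_of_mem (isOpen_Ioo.mem_nhds hθ) h0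
  have hz : HasDerivAt (fun _ : ℝ => (0:ℝ)) (h' θ) θ :=
    (hd θ).congr_of_eventuallyEq heq.symm
  have := (hasDerivAt_const θ (0:ℝ)).unique hz
  linarith [this]

/-- If for every `θ` in a nonempty open interval the rectangle
in orientation `θ` with `a` on its top side, `b` on its right side, `c` on its
bottom side and `d` on its left side is a square (equal height and width), then
`‖a - c‖ = ‖b - d‖` and the segments `ac` and `bd` are orthogonal. -/
theorem square_on_interval_diagonals (a b c d : ℝ × ℝ) (lo hi : ℝ) (hlt : lo < hi)
    (h : ∀ θ ∈ Set.Ioo lo hi,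
      |dot2 (a - c) (-(Real.sin θ), Real.cos θ)| =
        |dot2 (b - d) (Real.cos θ, Real.sin θ)|) :
    euclNorm (a - c) = euclNorm (b - d) ∧ dot2 (a - c) (b - d) = 0 := by
  set u1 := (a - c).1 with hu1
  set u2 := (a - c).2 with hu2
  set v1 := (b - d).1 with hv1
  set v2 := (b - d).2 with hv2
  -- the functions
  set f : ℝ → ℝ := fun t => u1 * -Real.sin t + u2 * Real.cos t with hf
  set g : ℝ → ℝ := fun t => v1 * Real.cos t + v2 * Real.sin t with hg
  set f' : ℝ → ℝ := fun t => u1 * -Real.cos t + u2 * -Real.sin t with hf'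
  set g' : ℝ → ℝ := fun t => v1 * -Real.sin t + v2 * Real.cos t with hg'
  have hdf : ∀ θ, HasDerivAt f (f' θ) θ := fun θ =>
    ((Real.hasDerivAt_sin θ).neg.const_mul u1).add ((Real.hasDerivAt_cos θ).const_mul u2)
  have hdg : ∀ θ, HasDerivAt g (g' θ) θ := fun θ =>
    ((Real.hasDerivAt_cos θ).const_mul v1).add ((Real.hasDerivAt_sin θ).const_mul v2)
  have hdf' : ∀ θ, HasDerivAt f' (-f θ) θ := by
    intro θ
    have := ((Real.hasDerivAt_cos θ).neg.const_mul u1).add ((Real.hasDerivAt_sin θ).neg.const_mul u2)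
    exact this.congr_deriv (by simp [hf]; ring)
  have hdg' : ∀ θ, HasDerivAt g' (-g θ) θ := by
    intro θ
    have := ((Real.hasDerivAt_sin θ).neg.const_mul v1).add ((Real.hasDerivAt_cos θ).const_mul v2)
    exact this.congr_deriv (by simp [hg]; ring)
  -- F = f*f - g*g vanishes on the interval
  have hF0 : ∀ θ ∈ Set.Ioo lo hi, f θ * f θ - g θ * g θ = 0 := by
    intro θ hθ
    have := h θ hθ
    have h2 : |dot2 (a - c) (-(Real.sin θ), Real.cos θ)| * |dot2 (a - c) (-(Real.sin θ), Real.cos θ)|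
        = |dot2 (b - d) (Real.cos θ, Real.sin θ)| * |dot2 (b - d) (Real.cos θ, Real.sin θ)| := by
      rw [this]
    rw [abs_mul_abs_self, abs_mul_abs_self] at h2
    simp only [dot2] at h2
    simp only [hf, hg]
    nlinarith [h2]
  have hdF : ∀ θ, HasDerivAt (fun t => f t * f t - g t * g t)
      (f' θ * f θ + f θ * f' θ - (g' θ * g θ + g θ * g' θ)) θ := fun θ =>
    ((hdf θ).mul (hdf θ)).sub ((hdg θ).mul (hdg θ))
  have hF1 : ∀ θ ∈ Set.Ioo lo hi,
      f' θ * f θ + f θ * f' θ - (g' θ * g θ + g θ * g' θ) = 0 :=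
    deriv_vanish_on_Ioo hdF hF0
  have hdF1 : ∀ θ, HasDerivAt (fun t => f' t * f t + f t * f' t - (g' t * g t + g t * g' t))
      ((-f θ) * f θ + f' θ * f' θ + (f' θ * f' θ + f θ * (-f θ))
        - ((-g θ) * g θ + g' θ * g' θ + (g' θ * g' θ + g θ * (-g θ)))) θ := fun θ =>
    (((hdf' θ).mul (hdf θ)).add ((hdf θ).mul (hdf' θ))).sub
      (((hdg' θ).mul (hdg θ)).add ((hdg θ).mul (hdg' θ)))
  have hF2 : ∀ θ ∈ Set.Ioo lo hi,
      (-f θ) * f θ + f' θ * f' θ + (f' θ * f' θ + f θ * (-f θ))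
        - ((-g θ) * g θ + g' θ * g' θ + (g' θ * g' θ + g θ * (-g θ))) = 0 :=
    deriv_vanish_on_Ioo hdF1 hF1
  -- evaluate at midpoint
  set θ0 := (lo + hi) / 2 with hθ0
  have hmem : θ0 ∈ Set.Ioo lo hi := ⟨by linarith, by linarith⟩
  have E0 := hF0 θ0 hmem
  have E1 := hF1 θ0 hmem
  have E2 := hF2 θ0 hmem
  have P : Real.sin θ0 ^ 2 + Real.cos θ0 ^ 2 = 1 := Real.sin_sq_add_cos_sq θ0
  simp only [hf, hg, hf', hg'] at E0 E1 E2
  set s := Real.sin θ0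
  set co := Real.cos θ0
  -- derived algebraic facts
  have key1 : u1 ^ 2 + u2 ^ 2 = v1 ^ 2 + v2 ^ 2 := by
    linear_combination 2 * E0 + E2 / 2 - (u1 ^ 2 + u2 ^ 2 - v1 ^ 2 - v2 ^ 2) * P
  have key2 : u1 * v1 + u2 * v2 = 0 := by
    have hsq : (u1 * v1 + u2 * v2) ^ 2 = 0 := by
      linear_combination ((v1 * (-s) + v2 * co) ^ 2 + (v1 * co + v2 * s) ^ 2) * E0
        - (v1 * co + v2 * s) * (v1 * (-s) + v2 * co) * E1
        + ((v1 * co + v2 * s) ^ 2 / 2) * E2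
        - (u1 * v1 + u2 * v2) ^ 2 * (s ^ 2 + co ^ 2 + 1) * P
    exact pow_eq_zero_iff (n := 2) (by norm_num) |>.mp hsq
  constructor
  · simp only [euclNorm, ← hu1, ← hu2, ← hv1, ← hv2, key1]
  · simp only [dot2, ← hu1, ← hu2, ← hv1, ← hv2]
    exact key2
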